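/- Let I ⊆ ℝ be an open interval, let γ : I → ℝ² be a C¹ curve parametrized by arc length with unit tangent τ(s) = γ'(s), and let n : I → ℝ² be a differentiable map of unit vectors with τ(s) = (−n₂(s), n₁(s)) and n'(s) = κ(s) τ(s) for a function κ : I → ℝ. Let v : ℝ² → ℝ² be C¹ with v(γ(s)) · n(s) = 0 for all s ∈ I, let α : I → ℝ, and suppose ω(v)(γ(s)) = (2κ(s) − α(s)) (v(γ(s)) · τ(s)) for all s ∈ I. Then for every s ∈ I and every vector u ∈ ℝ² parallel to τ(s) (i.e., u = c τ(s) for some c ∈ ℝ), one has (Dv(γ(s)) n(s)) · u = (κ(s) − α(s)) (v(γ(s)) · u). -/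

import Mathlib

noncomputable section

/-- Dot product on `ℝ²` (realized as `Fin 2 → ℝ`). -/
def dot2 (u w : Fin 2 → ℝ) : ℝ := u 0 * w 0 + u 1 * w 1

/-- Vorticity `ω(v)(x) = ∂₁v²(x) − ∂₂v¹(x)` (components indexed `0,1`). -/
def vort (v : (Fin 2 → ℝ) → Fin 2 → ℝ) (x : Fin 2 → ℝ) : ℝ :=
  fderiv ℝ v x (Pi.single 0 1) 1 - fderiv ℝ v x (Pi.single 1 1) 0

/-- Along a `C¹` arc-length curve `γ` in the open interval `(a,b)`, with unit normal `n`,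
positively-oriented tangent `τ = (−n₂, n₁) = γ'` and `n' = κ τ`, if a `C¹` vector field `v`
is tangent to the curve and satisfies `ω(v)(γ(s)) = (2κ(s) − α(s)) (v(γ(s)) ⬝ τ(s))`, then
for every vector `u` parallel to `τ(s)`,
`(Dv(γ(s)) n(s)) ⬝ u = (κ(s) − α(s)) (v(γ(s)) ⬝ u)`. -/
theorem grad_n_dot_parallel (a b : ℝ) (γ τ n : ℝ → Fin 2 → ℝ) (κ α : ℝ → ℝ)
    (v : (Fin 2 → ℝ) → Fin 2 → ℝ)
    (hγ : ∀ s ∈ Set.Ioo a b, HasDerivAt γ (τ s) s)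
    (hτcont : ContinuousOn τ (Set.Ioo a b))
    (hτunit : ∀ s ∈ Set.Ioo a b, dot2 (τ s) (τ s) = 1)
    (hnunit : ∀ s ∈ Set.Ioo a b, dot2 (n s) (n s) = 1)
    (hτdef : ∀ s ∈ Set.Ioo a b, τ s = ![-(n s 1), n s 0])
    (hn' : ∀ s ∈ Set.Ioo a b, HasDerivAt n (κ s • τ s) s)
    (hv : ContDiff ℝ 1 v)
    (htang : ∀ s ∈ Set.Ioo a b, dot2 (v (γ s)) (n s) = 0)
    (hω : ∀ s ∈ Set.Ioo a b,
      vort v (γ s) = (2 * κ s - α s) * dot2 (v (γ s)) (τ s)) :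
    ∀ s ∈ Set.Ioo a b, ∀ u : Fin 2 → ℝ, (∃ c : ℝ, u = c • τ s) →
      dot2 (fderiv ℝ v (γ s) (n s)) u = (κ s - α s) * dot2 (v (γ s)) u := by
  intro s hs u hu
  obtain ⟨c, rfl⟩ := hu
  have hvd : HasFDerivAt v (fderiv ℝ v (γ s)) (γ s) :=
    (hv.differentiable one_ne_zero (γ s)).hasFDerivAt
  have hvγ : HasDerivAt (fun t => v (γ t)) (fderiv ℝ v (γ s) (τ s)) s :=
    hvd.comp_hasDerivAt s (hγ s hs)
  have hcomp : ∀ i : Fin 2, HasDerivAt (fun t => v (γ t) i)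
      (fderiv ℝ v (γ s) (τ s) i) s := by
    intro i
    have := (ContinuousLinearMap.proj (R := ℝ) (φ := fun _ : Fin 2 => ℝ) i).hasFDerivAt.comp_hasDerivAt s hvγ
    exact this
  have hncomp : ∀ i : Fin 2, HasDerivAt (fun t => n t i) (κ s * τ s i) s := by
    intro i
    have := (ContinuousLinearMap.proj (R := ℝ) (φ := fun _ : Fin 2 => ℝ) i).hasFDerivAt.comp_hasDerivAt s (hn' s hs)
    exact this
  -- derivative of the tangency relation
  have hF : HasDerivAt (fun t => dot2 (v (γ t)) (n t))
      (fderiv ℝ v (γ s) (τ s) 0 * n s 0 + v (γ s) 0 * (κ s * τ s 0)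
        + (fderiv ℝ v (γ s) (τ s) 1 * n s 1 + v (γ s) 1 * (κ s * τ s 1))) s := by
    unfold dot2
    exact ((hcomp 0).mul (hncomp 0)).add ((hcomp 1).mul (hncomp 1))
  have hzero : HasDerivAt (fun t => dot2 (v (γ t)) (n t)) 0 s := by
    have heq : (fun t => dot2 (v (γ t)) (n t)) =ᶠ[nhds s] fun _ => (0 : ℝ) := by
      filter_upwards [isOpen_Ioo.mem_nhds hs] with t ht using htang t ht
    exact (hasDerivAt_const s (0 : ℝ)).congr_of_eventuallyEq heq
  have E1 : fderiv ℝ v (γ s) (τ s) 0 * n s 0 + v (γ s) 0 * (κ s * τ s 0)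
        + (fderiv ℝ v (γ s) (τ s) 1 * n s 1 + v (γ s) 1 * (κ s * τ s 1)) = 0 :=
    hF.unique hzero
  -- decomposition of the derivative
  have hdecomp : ∀ w : Fin 2 → ℝ, ∀ i : Fin 2, fderiv ℝ v (γ s) w i =
      w 0 * fderiv ℝ v (γ s) (Pi.single 0 1) i
        + w 1 * fderiv ℝ v (γ s) (Pi.single 1 1) i := by
    intro w i
    have hw : w = w 0 • (Pi.single 0 1 : Fin 2 → ℝ) + w 1 • (Pi.single 1 1 : Fin 2 → ℝ) := by
      ext j; fin_cases j <;> simp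
    conv_lhs => rw [hw]
    simp [map_add, map_smul]
  have E2 := hω s hs
  have N := hnunit s hs
  have hτ0 : τ s 0 = -(n s 1) := by rw [hτdef s hs]; simp
  have hτ1 : τ s 1 = n s 0 := by rw [hτdef s hs]; simp
  unfold vort at E2
  unfold dot2 at N E2 ⊢
  rw [hdecomp (n s) 0, hdecomp (n s) 1] at *
  rw [hdecomp (τ s) 0, hdecomp (τ s) 1] at E1
  simp only [Pi.smul_apply, smul_eq_mul]
  rw [hτ0, hτ1] at E1 E2 ⊢
  set B0 := fderiv ℝ v (γ s) (Pi.single 0 1) 0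
  set B1 := fderiv ℝ v (γ s) (Pi.single 0 1) 1
  set C0 := fderiv ℝ v (γ s) (Pi.single 1 1) 0
  set C1 := fderiv ℝ v (γ s) (Pi.single 1 1) 1
  linear_combination c * E1 + c * (n s 0 * n s 0 + n s 1 * n s 1) * E2
    + c * (2 * κ s - α s) * (v (γ s) 0 * (-(n s 1)) + v (γ s) 1 * n s 0) * N

end
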